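/- Let D ≥ 1, φ, μ ∈ ℝ^D, let Λ be a symmetric positive definite D×D real matrix, and let α > 0, β > 0. Then for every y ∈ ℝ, the posterior predictive density is a location-scale Student-t density: ∫₀^∞ ∫_{ℝ^D} N(y; θᵀφ, τ⁻¹) · NG(θ, τ; μ, Λ, α, β) dθ dτ = T(y; 2α, μᵀφ, (β/α)·(φᵀΛ⁻¹φ + 1)). -/

import Mathlib

open Real MeasureTheory Matrix

/-- Univariate Gaussian density `N(y; m, v)` with mean `m`, variance `v`. -/
noncomputable def gauss1 (y m v : ℝ) : ℝ :=
  (2 * π * v) ^ (-(1 : ℝ) / 2) * Real.exp (-((y - m) ^ 2) / (2 * v))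

/-- Multivariate Gaussian density in precision form: `N(θ; μ, P⁻¹)` with precision matrix `P`. -/
noncomputable def gaussND {ι : Type*} [Fintype ι] [DecidableEq ι]
    (θ μ : ι → ℝ) (P : Matrix ι ι ℝ) : ℝ :=
  (2 * π) ^ (-(Fintype.card ι : ℝ) / 2) * P.det ^ ((1 : ℝ) / 2) *
    Real.exp (-(1 / 2) * ((θ - μ) ⬝ᵥ (P *ᵥ (θ - μ))))

/-- Gamma density `G(τ; α, β)` with shape `α` and rate `β`. -/
noncomputable def gammaPdf (τ α β : ℝ) : ℝ :=
  β ^ α / Real.Gamma α * τ ^ (α - 1) * Real.exp (-β * τ)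

/-- Normal-Gamma density `NG(θ, τ; μ, Λ, α, β) = N(θ; μ, (τΛ)⁻¹) · G(τ; α, β)`. -/
noncomputable def normalGamma {ι : Type*} [Fintype ι] [DecidableEq ι]
    (θ : ι → ℝ) (τ : ℝ) (μ : ι → ℝ) (Λ : Matrix ι ι ℝ) (α β : ℝ) : ℝ :=
  gaussND θ μ (τ • Λ) * gammaPdf τ α β

/-- Location-scale Student-t density `T(y; ν, m, s²)`. -/
noncomputable def studentT (y ν m s2 : ℝ) : ℝ :=
  Real.Gamma ((ν + 1) / 2) / (Real.sqrt (π * ν * s2) * Real.Gamma (ν / 2)) *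
    (1 + (y - m) ^ 2 / (ν * s2)) ^ (-((ν + 1) / 2))

/-- Multivariate location-scale Student-t density `T_D(θ; ν, μ, Σ)`. -/
noncomputable def multiStudentT {ι : Type*} [Fintype ι] [DecidableEq ι]
    (θ : ι → ℝ) (ν : ℝ) (μ : ι → ℝ) (S : Matrix ι ι ℝ) : ℝ :=
  Real.Gamma ((ν + Fintype.card ι) / 2) /
      (Real.Gamma (ν / 2) * (ν * π) ^ ((Fintype.card ι : ℝ) / 2) * S.det ^ ((1 : ℝ) / 2)) *
    (1 + (θ - μ) ⬝ᵥ (S⁻¹ *ᵥ (θ - μ)) / ν) ^ (-((ν + Fintype.card ι) / 2))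

/-- The digamma function: the derivative of `ln ∘ Γ`. -/
noncomputable def digamma (x : ℝ) : ℝ := deriv (fun t => Real.log (Real.Gamma t)) x

/-- The Beta function `B(a, b) = Γ(a)Γ(b)/Γ(a+b)`. -/
noncomputable def betaFn (a b : ℝ) : ℝ := Real.Gamma a * Real.Gamma b / Real.Gamma (a + b)


lemma gauss_pi_int (D : ℕ) (t : ℝ) (ht : 0 < t) :
    ∫ u : Fin D → ℝ, Real.exp (-(t/2) * (u ⬝ᵥ u)) = (2*π/t) ^ ((D:ℝ)/2) := by
  have h1 : MeasurePreserving ((MeasurableEquiv.toLp 2 (Fin D → ℝ)).symm) volume volume :=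
    EuclideanSpace.volume_preserving_symm_measurableEquiv_toLp (Fin D)
  rw [← h1.integral_comp ((MeasurableEquiv.toLp 2 (Fin D → ℝ)).symm).measurableEmbedding]
  have : ∀ v : EuclideanSpace ℝ (Fin D),
      Real.exp (-(t/2) * (((MeasurableEquiv.toLp 2 (Fin D → ℝ)).symm) v ⬝ᵥ ((MeasurableEquiv.toLp 2 (Fin D → ℝ)).symm) v))
        = Real.exp (-(t/2) * ‖v‖^2) := by
    intro v
    congr 1
    rw [EuclideanSpace.norm_eq, Real.sq_sqrt (by positivity)]
    simp [dotProduct, sq]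
  simp_rw [this]
  rw [GaussianFourier.integral_rexp_neg_mul_sq_norm (by positivity : (0:ℝ) < t/2),
    finrank_euclideanSpace_fin, div_div_eq_mul_div, mul_comm π 2]

lemma gauss_quad_int (D : ℕ) (A : Matrix (Fin D) (Fin D) ℝ) (hA : A.PosDef)
    (t : ℝ) (ht : 0 < t) :
    ∫ x : Fin D → ℝ, Real.exp (-(t/2) * (x ⬝ᵥ A *ᵥ x)) =
      (2*π/t) ^ ((D:ℝ)/2) * A.det ^ (-(1:ℝ)/2) := by
  obtain ⟨B, hBpsd, hBA⟩ : ∃ B : Matrix (Fin D) (Fin D) ℝ, B.PosSemidef ∧ B * B = A :=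
    open scoped MatrixOrder in
    ⟨CFC.sqrt A, (CFC.sqrt_nonneg A).posSemidef, CFC.sqrt_mul_sqrt_self A hA.posSemidef.nonneg⟩
  have hdetA : 0 < A.det := hA.det_pos
  have hdetB2 : B.det * B.det = A.det := by rw [← det_mul, hBA]
  have hdetBne : B.det ≠ 0 := by
    intro h; rw [h, mul_zero] at hdetB2; exact hdetA.ne' hdetB2.symm
  have habs : |B.det| = Real.sqrt A.det := by
    rw [← hdetB2, Real.sqrt_mul_self_eq_abs]
  have hBsymm : Bᵀ = B := by
    have := hBpsd.isHermitian
    simpa [Matrix.IsHermitian, conjTranspose_eq_transpose_of_trivial] using this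
  -- quadratic form via B
  have hquad : ∀ x : Fin D → ℝ, x ⬝ᵥ A *ᵥ x = (B *ᵥ x) ⬝ᵥ (B *ᵥ x) := by
    intro x
    rw [← hBA, ← mulVec_mulVec, dotProduct_mulVec, ← mulVec_transpose, hBsymm]
  simp_rw [hquad]
  -- change of variables
  have hmap : Measure.map (toLin' B) volume =
      ENNReal.ofReal |B.det⁻¹| • (volume : Measure (Fin D → ℝ)) :=
    Real.map_matrix_volume_pi_eq_smul_volume_pi hdetBne
  have hmeas : Measurable (toLin' B) :=
    (LinearMap.continuous_of_finiteDimensional (toLin' B)).measurable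
  have hcont : Continuous fun u : Fin D → ℝ => Real.exp (-(t/2) * (u ⬝ᵥ u)) := by
    apply Real.continuous_exp.comp
    exact (continuous_const.mul (continuous_finset_sum _ fun i _ =>
      (continuous_apply i).mul (continuous_apply i)))
  have key : ∫ x : Fin D → ℝ, Real.exp (-(t/2) * ((B *ᵥ x) ⬝ᵥ (B *ᵥ x)))
      = |B.det|⁻¹ * ∫ u : Fin D → ℝ, Real.exp (-(t/2) * (u ⬝ᵥ u)) := by
    have := MeasureTheory.integral_map (μ := (volume : Measure (Fin D → ℝ)))
      (φ := toLin' B) hmeas.aemeasurable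
      (f := fun u : Fin D → ℝ => Real.exp (-(t/2) * (u ⬝ᵥ u)))
      hcont.aestronglyMeasurable
    rw [hmap, integral_smul_measure] at this
    simp only [toLin'_apply] at this
    rw [← this, ENNReal.toReal_ofReal (by positivity), abs_inv]
    rfl
  rw [key, gauss_pi_int D t ht, habs, mul_comm]
  congr 1
  rw [Real.sqrt_eq_rpow, ← Real.rpow_neg hdetA.le]
  norm_num


variable {D : ℕ}

lemma rk1_mulVec (φ v : Fin D → ℝ) :
    (Matrix.replicateCol Unit φ * Matrix.replicateRow Unit φ) *ᵥ v = (φ ⬝ᵥ v) • φ := by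
  ext i
  simp only [Matrix.mul_apply, mulVec, dotProduct, Pi.smul_apply, smul_eq_mul,
    Matrix.replicateCol_apply, Matrix.replicateRow_apply, Finset.univ_unique, Finset.sum_const,
    Finset.card_singleton, one_smul]
  rw [Finset.sum_mul]
  exact Finset.sum_congr rfl fun j _ => by ring

lemma rk1_posSemidef (φ : Fin D → ℝ) :
    (Matrix.replicateCol Unit φ * Matrix.replicateRow Unit φ).PosSemidef := by
  have h := Matrix.posSemidef_conjTranspose_mul_self (Matrix.replicateRow Unit φ)
  rwa [Matrix.conjTranspose_replicateRow, star_trivial] at h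

lemma rk1_transpose (φ : Fin D → ℝ) :
    (Matrix.replicateCol Unit φ * Matrix.replicateRow Unit φ)ᵀ = Matrix.replicateCol Unit φ * Matrix.replicateRow Unit φ := by
  rw [Matrix.transpose_mul, Matrix.transpose_replicateRow, Matrix.transpose_replicateCol]

lemma det_rank_one_update (φ : Fin D → ℝ) (Λ : Matrix (Fin D) (Fin D) ℝ) (hΛ : Λ.PosDef) :
    (Λ + Matrix.replicateCol Unit φ * Matrix.replicateRow Unit φ).det = Λ.det * (1 + φ ⬝ᵥ Λ⁻¹ *ᵥ φ) := by
  rw [Matrix.det_add_replicateCol_mul_replicateRow (isUnit_iff_ne_zero.2 hΛ.det_pos.ne') φ φ]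
  congr 1
  rw [Matrix.det_unique]
  simp only [Matrix.mul_apply, Matrix.mulVec, dotProduct, Finset.mul_sum, Finset.sum_mul,
    Matrix.add_apply, Matrix.one_apply_eq, Matrix.replicateRow_apply, Matrix.replicateCol_apply,
    Finset.univ_unique, Finset.sum_singleton]
  congr 1
  rw [Finset.sum_comm]
  exact Finset.sum_congr rfl fun x _ => Finset.sum_congr rfl fun i _ => by ring


lemma expand_quad (A Λ : Matrix (Fin D) (Fin D) ℝ) (φ x m w : Fin D → ℝ) (c s : ℝ)
    (hs : s ≠ 0) (hsk : s = 1 + φ ⬝ᵥ w)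
    (hAv : ∀ v, A *ᵥ v = Λ *ᵥ v + (φ ⬝ᵥ v) • φ)
    (hm : m = (c/s) • w) (hAm : A *ᵥ m = c • φ) (hAsymm : Aᵀ = A) :
    (c - x ⬝ᵥ φ)^2 + x ⬝ᵥ Λ *ᵥ x = (x - m) ⬝ᵥ A *ᵥ (x - m) + c^2/s := by
  have cross : m ⬝ᵥ A *ᵥ x = c * (φ ⬝ᵥ x) := by
    rw [dotProduct_mulVec, ← hAsymm, vecMul_transpose, hAm, smul_dotProduct, smul_eq_mul]
  have expand : (x - m) ⬝ᵥ A *ᵥ (x - m)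
      = x ⬝ᵥ Λ *ᵥ x + (φ ⬝ᵥ x) * (x ⬝ᵥ φ) - c * (x ⬝ᵥ φ) - c * (φ ⬝ᵥ x)
        + c * ((c/s) * (w ⬝ᵥ φ)) := by
    rw [mulVec_sub, dotProduct_sub, sub_dotProduct, sub_dotProduct, hAm, cross, hAv x,
      dotProduct_add, hm]
    simp only [dotProduct_smul, smul_dotProduct, smul_eq_mul, sub_dotProduct]
    ring
  rw [expand, dotProduct_comm φ x, dotProduct_comm w φ]
  have hk : φ ⬝ᵥ w = s - 1 := by rw [hsk]; ring
  rw [hk]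
  field_simp
  ring

lemma complete_sq (φ μ : Fin D → ℝ) (Λ : Matrix (Fin D) (Fin D) ℝ) (hΛ : Λ.PosDef)
    (y : ℝ) (θ : Fin D → ℝ) :
    (y - θ ⬝ᵥ φ)^2 + (θ - μ) ⬝ᵥ Λ *ᵥ (θ - μ) =
      (θ - (μ + ((y - μ ⬝ᵥ φ)/(1 + φ ⬝ᵥ Λ⁻¹ *ᵥ φ)) • (Λ⁻¹ *ᵥ φ))) ⬝ᵥ
        ((Λ + Matrix.replicateCol Unit φ * Matrix.replicateRow Unit φ) *ᵥ
        (θ - (μ + ((y - μ ⬝ᵥ φ)/(1 + φ ⬝ᵥ Λ⁻¹ *ᵥ φ)) • (Λ⁻¹ *ᵥ φ)))) +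
      (y - μ ⬝ᵥ φ)^2 / (1 + φ ⬝ᵥ Λ⁻¹ *ᵥ φ) := by
  have hk0 : (0:ℝ) ≤ φ ⬝ᵥ Λ⁻¹ *ᵥ φ := by
    have := hΛ.inv.posSemidef.dotProduct_mulVec_nonneg φ
    simpa using this
  have hs0 : (0:ℝ) < 1 + φ ⬝ᵥ Λ⁻¹ *ᵥ φ := by positivity
  have hΛw : Λ *ᵥ (Λ⁻¹ *ᵥ φ) = φ := by
    rw [mulVec_mulVec, Matrix.mul_nonsing_inv _ (isUnit_iff_ne_zero.2 hΛ.det_pos.ne'),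
      one_mulVec]
  have hΛsymm : Λᵀ = Λ := by
    simpa [Matrix.conjTranspose_eq_transpose_of_trivial] using hΛ.isHermitian.eq
  have hAv : ∀ v, (Λ + Matrix.replicateCol Unit φ * Matrix.replicateRow Unit φ) *ᵥ v
      = Λ *ᵥ v + (φ ⬝ᵥ v) • φ := fun v => by rw [add_mulVec, rk1_mulVec]
  have hAm : (Λ + Matrix.replicateCol Unit φ * Matrix.replicateRow Unit φ) *ᵥ
      (((y - μ ⬝ᵥ φ)/(1 + φ ⬝ᵥ Λ⁻¹ *ᵥ φ)) • (Λ⁻¹ *ᵥ φ)) = (y - μ ⬝ᵥ φ) • φ := by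
    rw [mulVec_smul, hAv, hΛw]
    have h1 : φ + (φ ⬝ᵥ Λ⁻¹ *ᵥ φ) • φ = (1 + φ ⬝ᵥ Λ⁻¹ *ᵥ φ) • φ := by
      rw [add_smul, one_smul]
    rw [h1, smul_smul, div_mul_cancel₀ _ hs0.ne']
  have hAsymm : (Λ + Matrix.replicateCol Unit φ * Matrix.replicateRow Unit φ)ᵀ
      = Λ + Matrix.replicateCol Unit φ * Matrix.replicateRow Unit φ := by
    rw [Matrix.transpose_add, rk1_transpose, hΛsymm]
  have hθ : θ - (μ + ((y - μ ⬝ᵥ φ)/(1 + φ ⬝ᵥ Λ⁻¹ *ᵥ φ)) • (Λ⁻¹ *ᵥ φ))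
      = (θ - μ) - ((y - μ ⬝ᵥ φ)/(1 + φ ⬝ᵥ Λ⁻¹ *ᵥ φ)) • (Λ⁻¹ *ᵥ φ) := by
    rw [sub_add_eq_sub_sub]
  have hyθ : y - θ ⬝ᵥ φ = (y - μ ⬝ᵥ φ) - (θ - μ) ⬝ᵥ φ := by
    rw [sub_dotProduct]; ring
  rw [hθ, hyθ]
  exact expand_quad _ Λ φ (θ - μ) _ (Λ⁻¹ *ᵥ φ) (y - μ ⬝ᵥ φ) (1 + φ ⬝ᵥ Λ⁻¹ *ᵥ φ)
    hs0.ne' rfl hAv rfl hAm hAsymm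

lemma inner_int {D : ℕ} (φ μ : Fin D → ℝ) (Λ : Matrix (Fin D) (Fin D) ℝ) (hΛ : Λ.PosDef)
    (y α β : ℝ) {τ : ℝ} (hτ : 0 < τ) :
    ∫ θ : Fin D → ℝ, gauss1 y (θ ⬝ᵥ φ) τ⁻¹ * normalGamma θ τ μ Λ α β
      = gammaPdf τ α β * ((2 * π * (1 + φ ⬝ᵥ Λ⁻¹ *ᵥ φ)) ^ (-(1:ℝ)/2) * τ ^ ((1:ℝ)/2)
          * Real.exp (-(τ/2) * ((y - μ ⬝ᵥ φ)^2 / (1 + φ ⬝ᵥ Λ⁻¹ *ᵥ φ)))) := by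
  have hk0 : (0:ℝ) ≤ φ ⬝ᵥ Λ⁻¹ *ᵥ φ := by
    have := hΛ.inv.posSemidef.dotProduct_mulVec_nonneg φ
    simpa using this
  set s : ℝ := 1 + φ ⬝ᵥ Λ⁻¹ *ᵥ φ with hsdef
  set c : ℝ := y - μ ⬝ᵥ φ with hcdef
  have hs0 : (0:ℝ) < s := by rw [hsdef]; positivity
  set A : Matrix (Fin D) (Fin D) ℝ := Λ + Matrix.replicateCol Unit φ * Matrix.replicateRow Unit φ with hAdef
  set θ₀ : Fin D → ℝ := μ + (c/s) • (Λ⁻¹ *ᵥ φ) with hθ₀def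
  have hApos : A.PosDef := hΛ.add_posSemidef (rk1_posSemidef φ)
  have hdetA : A.det = Λ.det * s := det_rank_one_update φ Λ hΛ
  have hdetΛ : 0 < Λ.det := hΛ.det_pos
  set K : ℝ := (2 * π * τ⁻¹) ^ (-(1:ℝ)/2) * ((2 * π) ^ (-(D:ℝ)/2) * (τ • Λ).det ^ ((1:ℝ)/2))
      * Real.exp (-(τ/2) * (c^2/s)) * gammaPdf τ α β with hKdef
  have point : ∀ θ : Fin D → ℝ, gauss1 y (θ ⬝ᵥ φ) τ⁻¹ * normalGamma θ τ μ Λ α β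
      = K * Real.exp (-(τ/2) * ((θ - θ₀) ⬝ᵥ A *ᵥ (θ - θ₀))) := by
    intro θ
    have hcs := complete_sq φ μ Λ hΛ y θ
    rw [← hsdef, ← hcdef, ← hAdef, ← hθ₀def] at hcs
    have hsm : (θ - μ) ⬝ᵥ (τ • Λ) *ᵥ (θ - μ) = τ * ((θ - μ) ⬝ᵥ Λ *ᵥ (θ - μ)) := by
      rw [smul_mulVec, dotProduct_smul, smul_eq_mul]
    rw [gauss1, normalGamma, gaussND, gammaPdf, hKdef, gammaPdf]
    rw [hsm]
    rw [show (Fintype.card (Fin D) : ℝ) = (D:ℝ) by simp]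
    rw [show (-((y - θ ⬝ᵥ φ) ^ 2) / (2 * τ⁻¹) : ℝ)
        = -(τ/2) * (y - θ ⬝ᵥ φ)^2 by field_simp]
    have hexp : Real.exp (-(τ/2) * (y - θ ⬝ᵥ φ)^2)
        * Real.exp (-(1/2) * (τ * ((θ - μ) ⬝ᵥ Λ *ᵥ (θ - μ))))
        = Real.exp (-(τ/2) * (c^2/s)) * Real.exp (-(τ/2) * ((θ - θ₀) ⬝ᵥ A *ᵥ (θ - θ₀))) := by
      rw [← Real.exp_add, ← Real.exp_add]
      congr 1
      linear_combination (-(τ/2)) * hcs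
    linear_combination ((2 * π * τ⁻¹) ^ (-(1:ℝ)/2) * ((2 * π) ^ (-(D:ℝ)/2)
      * (τ • Λ).det ^ ((1:ℝ)/2)) * (β ^ α / Real.Gamma α * τ ^ (α - 1)
      * Real.exp (-β * τ))) * hexp
  simp only [point]
  rw [MeasureTheory.integral_const_mul]
  have htrans : ∫ θ : Fin D → ℝ, Real.exp (-(τ/2) * ((θ - θ₀) ⬝ᵥ A *ᵥ (θ - θ₀)))
      = ∫ u : Fin D → ℝ, Real.exp (-(τ/2) * (u ⬝ᵥ A *ᵥ u)) := by
    simp_rw [sub_eq_add_neg]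
    exact MeasureTheory.integral_add_right_eq_self
      (fun u : Fin D → ℝ => Real.exp (-(τ/2) * (u ⬝ᵥ A *ᵥ u))) (-θ₀)
  rw [htrans, gauss_quad_int D A hApos τ hτ, hdetA, hKdef]
  have hdsmul : (τ • Λ).det = τ ^ (D:ℕ) * Λ.det := by
    rw [Matrix.det_smul]
    simp
  rw [hdsmul]
  have h2π : (0:ℝ) < 2*π := by positivity
  have e1 : (2*π*τ⁻¹ : ℝ) ^ (-(1:ℝ)/2) = (2*π : ℝ) ^ (-(1:ℝ)/2) * τ ^ ((1:ℝ)/2) := by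
    rw [Real.mul_rpow h2π.le (inv_nonneg.2 hτ.le), Real.inv_rpow hτ.le,
      ← Real.rpow_neg hτ.le]
    norm_num
  have e2 : ((τ:ℝ) ^ (D:ℕ) * Λ.det) ^ ((1:ℝ)/2)
      = τ ^ ((D:ℝ)/2) * Λ.det ^ ((1:ℝ)/2) := by
    rw [Real.mul_rpow (by positivity) hdetΛ.le, ← Real.rpow_natCast τ D,
      ← Real.rpow_mul hτ.le]
    ring_nf
  have e3 : ((2*π/τ:ℝ)) ^ ((D:ℝ)/2) = (2*π:ℝ) ^ ((D:ℝ)/2) * (τ ^ ((D:ℝ)/2))⁻¹ := by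
    rw [Real.div_rpow h2π.le hτ.le, div_eq_mul_inv]
  have e4 : ((Λ.det * s:ℝ)) ^ (-(1:ℝ)/2)
      = (Λ.det ^ ((1:ℝ)/2))⁻¹ * (s ^ ((1:ℝ)/2))⁻¹ := by
    rw [Real.mul_rpow hdetΛ.le hs0.le, show (-(1:ℝ)/2) = -((1:ℝ)/2) by norm_num,
      Real.rpow_neg hdetΛ.le, Real.rpow_neg hs0.le]
  have e5 : ((2*π*s:ℝ)) ^ (-(1:ℝ)/2) = (2*π:ℝ) ^ (-(1:ℝ)/2) * (s ^ ((1:ℝ)/2))⁻¹ := by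
    rw [Real.mul_rpow h2π.le hs0.le, show (-(1:ℝ)/2) = -((1:ℝ)/2) by norm_num,
      Real.rpow_neg hs0.le]
  have e6 : (2*π:ℝ) ^ (-(D:ℝ)/2) = ((2*π:ℝ) ^ ((D:ℝ)/2))⁻¹ := by
    rw [show (-(D:ℝ)/2) = -((D:ℝ)/2) by rw [neg_div], Real.rpow_neg h2π.le]
  rw [e1, e2, e3, e4, e5, e6]
  have p1 : (0:ℝ) < (2*π:ℝ) ^ ((D:ℝ)/2) := Real.rpow_pos_of_pos h2π _
  have p2 : (0:ℝ) < τ ^ ((D:ℝ)/2) := Real.rpow_pos_of_pos hτ _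
  have p3 : (0:ℝ) < Λ.det ^ ((1:ℝ)/2) := Real.rpow_pos_of_pos hdetΛ _
  have p4 : (0:ℝ) < s ^ ((1:ℝ)/2) := Real.rpow_pos_of_pos hs0 _
  field_simp

/-- the posterior predictive density of the Gaussian NARX likelihood under a
Normal-Gamma distribution on (θ, τ) is a location-scale Student-t density. -/
theorem posterior_predictive_is_studentT (D : ℕ) (hD : 1 ≤ D) (φ μ : Fin D → ℝ)
    (Λ : Matrix (Fin D) (Fin D) ℝ) (hΛ : Λ.PosDef) (α β : ℝ) (hα : 0 < α) (hβ : 0 < β)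
    (y : ℝ) :
    (∫ τ in Set.Ioi (0 : ℝ), ∫ θ : Fin D → ℝ,
        gauss1 y (θ ⬝ᵥ φ) τ⁻¹ * normalGamma θ τ μ Λ α β) =
      studentT y (2 * α) (μ ⬝ᵥ φ) ((β / α) * (φ ⬝ᵥ (Λ⁻¹ *ᵥ φ) + 1)) := by
  have hk0 : (0:ℝ) ≤ φ ⬝ᵥ Λ⁻¹ *ᵥ φ := by
    have := hΛ.inv.posSemidef.dotProduct_mulVec_nonneg φ
    simpa using this
  set k : ℝ := φ ⬝ᵥ Λ⁻¹ *ᵥ φ with hkdef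
  set c : ℝ := y - μ ⬝ᵥ φ with hcdef
  set s : ℝ := 1 + k with hsdef
  have hs0 : (0:ℝ) < s := by rw [hsdef]; positivity
  set r : ℝ := β + c^2 / (2*s) with hrdef
  have hr0 : (0:ℝ) < r := by rw [hrdef]; positivity
  set g : ℝ := 1 + c^2 / (2*β*s) with hgdef
  have hg0 : (0:ℝ) < g := by rw [hgdef]; positivity
  have hrg : r = β * g := by rw [hrdef, hgdef]; field_simp
  -- step 1: compute the inner integral
  rw [MeasureTheory.setIntegral_congr_fun measurableSet_Ioi
    (fun τ hτ => inner_int φ μ Λ hΛ y α β (Set.mem_Ioi.1 hτ))]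
  -- step 2: rewrite integrand in Gamma-integral form
  have step2 : ∀ τ ∈ Set.Ioi (0:ℝ),
      gammaPdf τ α β * ((2 * π * s) ^ (-(1:ℝ)/2) * τ ^ ((1:ℝ)/2)
        * Real.exp (-(τ/2) * (c^2 / s)))
      = (β ^ α / Real.Gamma α * (2 * π * s) ^ (-(1:ℝ)/2))
        * (τ ^ ((α + 1/2) - 1) * Real.exp (-(r * τ))) := by
    intro τ hτ
    have hτ0 : (0:ℝ) < τ := Set.mem_Ioi.1 hτ
    rw [gammaPdf]
    have hτpow : τ ^ (α - 1) * τ ^ ((1:ℝ)/2) = τ ^ ((α + 1/2) - 1) := by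
      rw [← Real.rpow_add hτ0]
      ring_nf
    have hexp : Real.exp (-β * τ) * Real.exp (-(τ/2) * (c^2/s)) = Real.exp (-(r * τ)) := by
      rw [← Real.exp_add]
      congr 1
      rw [hrdef]
      field_simp
      ring
    calc β ^ α / Real.Gamma α * τ ^ (α - 1) * Real.exp (-β * τ)
          * ((2 * π * s) ^ (-(1:ℝ)/2) * τ ^ ((1:ℝ)/2) * Real.exp (-(τ/2) * (c^2 / s)))
        = (β ^ α / Real.Gamma α * (2 * π * s) ^ (-(1:ℝ)/2))
          * ((τ ^ (α - 1) * τ ^ ((1:ℝ)/2))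
            * (Real.exp (-β * τ) * Real.exp (-(τ/2) * (c^2/s)))) := by ring
      _ = _ := by rw [hτpow, hexp]
  rw [MeasureTheory.setIntegral_congr_fun measurableSet_Ioi step2,
    MeasureTheory.integral_const_mul,
    integral_rpow_mul_exp_neg_mul_Ioi (by positivity : (0:ℝ) < α + 1/2) hr0]
  -- step 3: final scalar algebra
  rw [studentT]
  have hΓarg : 2 * α / 2 = α := by ring
  have hΓarg2 : (2 * α + 1)/2 = α + 1/2 := by ring
  have hbase : 1 + (y - μ ⬝ᵥ φ)^2 / (2 * α * (β / α * (k + 1))) = g := by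
    rw [hgdef, ← hcdef]
    congr 1
    rw [show 2 * α * (β / α * (k + 1)) = 2*β*s by rw [hsdef]; field_simp; ring]
  have hsqrtarg : π * (2 * α) * (β / α * (k + 1)) = (2 * π * s) * β := by
    rw [hsdef]; field_simp; ring
  rw [hΓarg, hΓarg2, hbase, hsqrtarg]
  have h2πs : (0:ℝ) < 2 * π * s := by positivity
  have hsqrt : Real.sqrt ((2 * π * s) * β) = (2*π*s) ^ ((1:ℝ)/2) * β ^ ((1:ℝ)/2) := by
    rw [Real.sqrt_eq_rpow, Real.mul_rpow h2πs.le hβ.le]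
  rw [hsqrt]
  have hr' : (1/r) ^ (α + 1/2) = (β ^ (α + 1/2) * g ^ (α + 1/2))⁻¹ := by
    rw [one_div, Real.inv_rpow hr0.le, hrg, Real.mul_rpow hβ.le hg0.le]
  rw [hr']
  have hβsplit : β ^ (α + 1/2) = β ^ α * β ^ ((1:ℝ)/2) := by
    rw [← Real.rpow_add hβ]
  have hgneg : g ^ (-(α + 1/2)) = (g ^ (α + 1/2))⁻¹ := Real.rpow_neg hg0.le _
  rw [hβsplit, hgneg]
  have n1 : Real.Gamma α ≠ 0 := (Real.Gamma_pos_of_pos hα).ne'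
  have n2 : (2*π*s : ℝ) ^ (-(1:ℝ)/2) = ((2*π*s : ℝ) ^ ((1:ℝ)/2))⁻¹ := by
    rw [show (-(1:ℝ)/2) = -((1:ℝ)/2) by rw [neg_div], Real.rpow_neg h2πs.le]
  rw [n2]
  have p1 : (0:ℝ) < (2*π*s : ℝ) ^ ((1:ℝ)/2) := Real.rpow_pos_of_pos h2πs _
  have p2 : (0:ℝ) < β ^ ((1:ℝ)/2) := Real.rpow_pos_of_pos hβ _
  have p3 : (0:ℝ) < β ^ α := Real.rpow_pos_of_pos hβ _
  have p4 : (0:ℝ) < g ^ (α + 1/2) := Real.rpow_pos_of_pos hg0 _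
  field_simp
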